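/- Let n ≥ 3. For every regular n-gon with center c, circumradius R > 0 and orientation θ, and every point M in its plane with L = |M − c|, one has S_n^{(4)} = (R² + L²)² + 2R²L², i.e. (1/n)·∑_{k=0}^{n−1} |M − v_k|⁴ = (R² + L²)² + 2R²L². -/

import Mathlib

open Complex Real Finset

theorem cyclic_average_S4 (n : ℕ) (hn : 3 ≤ n)
    (c M : ℂ) (R θ : ℝ) (hR : 0 < R) (L : ℝ) (hL : L = ‖M - c‖) :
    (1 / n : ℝ) * ∑ k ∈ Finset.range n,
        (‖M - (c + R * Complex.exp (Complex.I * ((2 * π * k / n + θ : ℝ) : ℂ)))‖) ^ 4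
      = (R ^ 2 + L ^ 2) ^ 2 + 2 * R ^ 2 * L ^ 2 := by
  have hn0 : (n : ℝ) ≠ 0 := by positivity
  set ζ : ℂ := Complex.exp (2 * π * Complex.I / n) with hζdef
  have hprim : IsPrimitiveRoot ζ n := Complex.isPrimitiveRoot_exp n (by omega)
  have hζn : ζ ^ n = 1 := hprim.pow_eq_one
  have hζ0 : ζ ≠ 0 := hprim.ne_zero (by omega)
  have hζ1 : ζ ≠ 1 := hprim.ne_one (by omega)
  have hζ2 : ζ ^ 2 ≠ 1 := by
    intro h
    have h2 := (hprim.pow_eq_one_iff_dvd 2).mp h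
    have := Nat.le_of_dvd (by norm_num) h2
    omega
  have gsum : ∀ x : ℂ, x ^ n = 1 → x ≠ 1 → ∑ k ∈ Finset.range n, x ^ k = 0 := by
    intro x hxn hx1
    rw [geom_sum_eq hx1, hxn, sub_self, zero_div]
  have sum1 : ∑ k ∈ Finset.range n, ζ ^ k = 0 := gsum ζ hζn hζ1
  have sum2 : ∑ k ∈ Finset.range n, (ζ ^ 2) ^ k = 0 := by
    refine gsum _ ?_ hζ2
    rw [← pow_mul, mul_comm, pow_mul, hζn, one_pow]
  have hinv1 : ζ⁻¹ ≠ 1 := by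
    intro h; exact hζ1 (by rw [← inv_inv ζ, h, inv_one])
  have hinv2 : (ζ⁻¹) ^ 2 ≠ 1 := by
    intro h; exact hζ2 (by rw [← inv_inv (ζ ^ 2), ← inv_pow, h, inv_one])
  have sum3 : ∑ k ∈ Finset.range n, (ζ⁻¹) ^ k = 0 := by
    refine gsum _ ?_ hinv1
    rw [inv_pow, hζn, inv_one]
  have sum4 : ∑ k ∈ Finset.range n, ((ζ⁻¹) ^ 2) ^ k = 0 := by
    refine gsum _ ?_ hinv2
    rw [← pow_mul, mul_comm, pow_mul, inv_pow, hζn, inv_one, one_pow]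
  set z : ℂ := M - c with hz
  set w : ℂ := (R : ℂ) * Complex.exp ((θ : ℝ) * Complex.I) with hw
  have hconjζ : (starRingEnd ℂ) ζ = ζ⁻¹ := by
    rw [hζdef, ← Complex.exp_conj, ← Complex.exp_neg]
    congr 1
    rw [map_div₀, map_mul, map_mul, Complex.conj_I, Complex.conj_ofReal, map_ofNat,
      map_natCast]
    ring
  have hvert : ∀ k : ℕ, M - (c + (R : ℂ) * Complex.exp (Complex.I * ((2 * π * k / n + θ : ℝ) : ℂ)))
      = z - w * ζ ^ k := by
    intro k
    have harg : Complex.I * ((2 * π * k / n + θ : ℝ) : ℂ)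
        = (θ : ℂ) * Complex.I + (k : ℂ) * (2 * π * Complex.I / n) := by
      push_cast; ring
    rw [harg, Complex.exp_add, Complex.exp_nat_mul, ← hζdef]
    rw [hz, hw]; ring
  have hzz : z * (starRingEnd ℂ) z = ((L : ℂ)) ^ 2 := by
    rw [Complex.mul_conj, hL, ← Complex.sq_norm]
    push_cast
    ring
  have hww : w * (starRingEnd ℂ) w = ((R : ℂ)) ^ 2 := by
    rw [Complex.mul_conj, hw, Complex.normSq_mul, Complex.normSq_ofReal]
    have : Complex.normSq (Complex.exp ((θ : ℝ) * Complex.I)) = 1 := by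
      rw [← Complex.sq_norm, Complex.norm_exp_ofReal_mul_I]; norm_num
    rw [this]
    push_cast
    ring
  set zb : ℂ := (starRingEnd ℂ) z with hzb
  set wb : ℂ := (starRingEnd ℂ) w with hwb
  -- per-k complex identity
  have key : ∀ k : ℕ,
      ((z - w * ζ ^ k) * (starRingEnd ℂ) (z - w * ζ ^ k)) ^ 2
        = ((z * zb + w * wb) ^ 2 + 2 * (z * zb) * (w * wb))
          - (2 * (z * zb + w * wb) * (zb * w)) * ζ ^ k
          - (2 * (z * zb + w * wb) * (z * wb)) * (ζ⁻¹) ^ k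
          + (zb ^ 2 * w ^ 2) * (ζ ^ 2) ^ k
          + (z ^ 2 * wb ^ 2) * ((ζ⁻¹) ^ 2) ^ k := by
    intro k
    have hconj : (starRingEnd ℂ) (z - w * ζ ^ k) = zb - wb * (ζ ^ k)⁻¹ := by
      rw [map_sub, map_mul, map_pow, hconjζ, inv_pow, hzb, hwb]
    rw [hconj, inv_pow ζ k, pow_right_comm ζ 2 k, pow_right_comm ζ⁻¹ 2 k, inv_pow ζ k]
    have hk0 : ζ ^ k ≠ 0 := pow_ne_zero _ hζ0
    field_simp
    ring
  have habs4 : ∀ k : ℕ,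
      (‖z - w * ζ ^ k‖) ^ 4
        = (((z - w * ζ ^ k) * (starRingEnd ℂ) (z - w * ζ ^ k)) ^ 2).re := by
    intro k
    rw [Complex.mul_conj, ← Complex.ofReal_pow, Complex.ofReal_re, ← Complex.sq_norm]
    ring
  have hE : (z * zb + w * wb) ^ 2 + 2 * (z * zb) * (w * wb)
      = (((R ^ 2 + L ^ 2) ^ 2 + 2 * R ^ 2 * L ^ 2 : ℝ) : ℂ) := by
    rw [hzb, hwb, hzz, hww]
    push_cast
    ring
  have hsum : ∑ k ∈ Finset.range n,
      (‖M - (c + (R : ℂ) * Complex.exp (Complex.I * ((2 * π * k / n + θ : ℝ) : ℂ)))‖) ^ 4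
      = n * ((R ^ 2 + L ^ 2) ^ 2 + 2 * R ^ 2 * L ^ 2) := by
    have step1 : ∀ k ∈ Finset.range n,
        (‖M - (c + (R : ℂ) * Complex.exp (Complex.I * ((2 * π * k / n + θ : ℝ) : ℂ)))‖) ^ 4
        = (((z * zb + w * wb) ^ 2 + 2 * (z * zb) * (w * wb))
          - (2 * (z * zb + w * wb) * (zb * w)) * ζ ^ k
          - (2 * (z * zb + w * wb) * (z * wb)) * (ζ⁻¹) ^ k
          + (zb ^ 2 * w ^ 2) * (ζ ^ 2) ^ k
          + (z ^ 2 * wb ^ 2) * ((ζ⁻¹) ^ 2) ^ k).re := by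
      intro k _
      rw [hvert k, habs4 k, key k]
    rw [Finset.sum_congr rfl step1, ← Complex.re_sum]
    have hcs : ∑ k ∈ Finset.range n,
        (((z * zb + w * wb) ^ 2 + 2 * (z * zb) * (w * wb))
          - (2 * (z * zb + w * wb) * (zb * w)) * ζ ^ k
          - (2 * (z * zb + w * wb) * (z * wb)) * (ζ⁻¹) ^ k
          + (zb ^ 2 * w ^ 2) * (ζ ^ 2) ^ k
          + (z ^ 2 * wb ^ 2) * ((ζ⁻¹) ^ 2) ^ k)
        = n * (((z * zb + w * wb) ^ 2 + 2 * (z * zb) * (w * wb))) := by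
      simp only [Finset.sum_add_distrib, Finset.sum_sub_distrib, ← Finset.mul_sum,
        sum1, sum2, sum3, sum4, Finset.sum_const, Finset.card_range, mul_zero,
        sub_zero, add_zero, nsmul_eq_mul]
      ring
    rw [hcs, hE, ← Complex.ofReal_natCast, ← Complex.ofReal_mul, Complex.ofReal_re]
  rw [hsum]
  field_simp
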